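/- Let m ∈ ℕ, let x, x' ∈ X_m, and set y = x + x' ∈ Y_m. Then 𝔖(x) ∪ 𝔖(x') ⊆ R(y), where R(y) is the set of endpoints of intervals in 𝔉(y). -/
import Mathlib


open Finset

/-- `X_m`: sequences `(x_0,…,x_m)` in `ℕ` with `x i ≤ x (i+1)` and `x i < x (i+2)`. -/
def IsX (m : ℕ) (x : ℕ → ℕ) : Prop :=
  (∀ i, i < m → x i ≤ x (i + 1)) ∧ (∀ i, i + 2 ≤ m → x i < x (i + 2))

/-- `Y_m`: sequences with `y i ≤ y (i+1)` and `y i + 2 ≤ y (i+2)`. -/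
def IsY (m : ℕ) (y : ℕ → ℕ) : Prop :=
  (∀ i, i < m → y i ≤ y (i + 1)) ∧ (∀ i, i + 2 ≤ m → y i + 2 ≤ y (i + 2))

/-- `ℰ_m`: weakly increasing sequences. -/
def IsE (m : ℕ) (e : ℕ → ℕ) : Prop := ∀ i, i < m → e i ≤ e (i + 1)

/-- `𝔖(x)`: indices `i ∈ [0,m]` with `x (i-1) < x i < x (i+1)`,
with conventions `x_{-1} = -∞`, `x_{m+1} = +∞`. -/
def SS (m : ℕ) (x : ℕ → ℕ) : Finset ℕ :=
  (Finset.range (m + 1)).filter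
    (fun i => (i = 0 ∨ x (i - 1) < x i) ∧ (i = m ∨ x i < x (i + 1)))

/-- `𝔉(y)`: intervals `[i,j] ⊆ [0,m]` with
`y_{i-1}-(i-1) < y_i-i = ⋯ = y_j-j < y_{j+1}-(j+1)` (conventions `±∞` at the ends),
encoded as pairs `(i, j)`. -/
def FF (m : ℕ) (y : ℕ → ℕ) : Finset (ℕ × ℕ) :=
  ((Finset.range (m + 1)) ×ˢ (Finset.range (m + 1))).filter
    (fun p => p.1 ≤ p.2 ∧
      (p.1 = 0 ∨ ((y (p.1 - 1) : ℤ) - ((p.1 : ℤ) - 1) < (y p.1 : ℤ) - (p.1 : ℤ))) ∧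
      (p.2 = m ∨ ((y p.2 : ℤ) - (p.2 : ℤ) < (y (p.2 + 1) : ℤ) - ((p.2 : ℤ) + 1))) ∧
      (∀ k ∈ Finset.Ico p.1 p.2, ((y k : ℤ) - (k : ℤ) = (y (k + 1) : ℤ) - ((k : ℤ) + 1))))

/-- `𝔉'(y)`: the intervals in `𝔉(y)` of odd cardinality. -/
def FF' (m : ℕ) (y : ℕ → ℕ) : Finset (ℕ × ℕ) :=
  (FF m y).filter (fun p => Odd (p.2 - p.1 + 1))

/-- `R(y)`: endpoints of intervals in `𝔉(y)`. -/
def RR (m : ℕ) (y : ℕ → ℕ) : Finset ℕ :=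
  (Finset.range (m + 1)).filter (fun k => ∃ p ∈ FF m y, k = p.1 ∨ k = p.2)

/-- `R_0(y)`: those `k` with `[k,k] ∈ 𝔉(y)`. -/
def RR0 (m : ℕ) (y : ℕ → ℕ) : Finset ℕ :=
  (Finset.range (m + 1)).filter (fun k => (k, k) ∈ FF m y)

/-- `S(y)`: pairs `(x, x') ∈ X_m × X_m` with `x + x' = y`,
`𝔖(x) ∪ 𝔖(x') = R(y)`, `𝔖(x) ∩ 𝔖(x') = R_0(y)`, and `𝔖(x') = ∅` if `𝔉'(y) = ∅`. -/
def IsS (m : ℕ) (y x x' : ℕ → ℕ) : Prop :=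
  IsX m x ∧ IsX m x' ∧ (∀ i, i ≤ m → x i + x' i = y i) ∧
  SS m x ∪ SS m x' = RR m y ∧ SS m x ∩ SS m x' = RR0 m y ∧
  (FF' m y = ∅ → SS m x' = ∅)

lemma key_stmt6 (m : ℕ) (x x' : ℕ → ℕ) (hx : IsX m x) (hx' : IsX m x') :
    SS m x ⊆ RR m (fun i => x i + x' i) := by
  classical
  intro k hk
  simp only [SS, mem_filter, mem_range] at hk
  obtain ⟨hkm, hA, hB⟩ := hk
  have hkm' : k ≤ m := by omega
  set y : ℕ → ℕ := fun i => x i + x' i with hy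
  have hyd : ∀ i, y i = x i + x' i := fun i => rfl
  have hmono : ∀ t, t < m → y t ≤ y (t+1) := by
    intro t ht
    have h1 := hx.1 t ht; have h2 := hx'.1 t ht
    simp only [hyd]; omega
  have htwo : ∀ t, t + 2 ≤ m → y t + 2 ≤ y (t+2) := by
    intro t ht
    have h1 := hx.2 t ht; have h2 := hx'.2 t ht
    simp only [hyd]; omega
  have st1 : k ≠ 0 → y (k-1) + 1 ≤ y k := by
    intro h0
    have h1 := hA.resolve_left h0
    have h2 := hx'.1 (k-1) (by omega)
    have h3 : k - 1 + 1 = k := by omega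
    rw [h3] at h2
    simp only [hyd]; omega
  have st2 : k ≠ m → y k + 1 ≤ y (k+1) := by
    intro h0
    have h1 := hB.resolve_left h0
    have h2 := hx'.1 k (by omega)
    simp only [hyd]; omega
  by_cases hL : k = 0 ∨ y (k-1) + 2 ≤ y k
  · -- k is a left endpoint; find the right end of the interval
    have hP : ∃ d, (k + d = m ∨ y (k + d + 1) ≠ y (k + d) + 1) :=
      ⟨m - k, Or.inl (by omega)⟩
    set d0 := Nat.find hP with hd0
    have hspec := Nat.find_spec hP
    have hd0le : d0 ≤ m - k := Nat.find_min' hP (Or.inl (by omega))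
    set j := k + d0 with hj
    have hjm : j ≤ m := by omega
    have hconst : ∀ t, k ≤ t → t < j → y (t+1) = y t + 1 := by
      intro t h1 h2
      have hlt : t - k < d0 := by omega
      have hmin := Nat.find_min hP hlt
      push_neg at hmin
      have e1 : k + (t - k) = t := by omega
      rw [e1] at hmin
      exact hmin.2
    have hrt : j = m ∨ y j + 2 ≤ y (j+1) := by
      by_cases hjm2 : j = m
      · exact Or.inl hjm2
      · right
        have hne : y (j+1) ≠ y j + 1 := by
          rcases hspec with h | h
          · exact absurd h hjm2
          · exact h
        rcases Nat.eq_or_lt_of_le (show k ≤ j by omega) with hkj | hkj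
        · have h1 := st2 (by omega)
          rw [← hkj] at hne ⊢
          omega
        · have h1 := hconst (j-1) (by omega) (by omega)
          have e : j - 1 + 1 = j := by omega
          rw [e] at h1
          have h2 := htwo (j-1) (by omega)
          have e2 : j - 1 + 2 = j + 1 := by omega
          rw [e2] at h2
          omega
    simp only [RR, mem_filter, mem_range]
    refine ⟨by omega, ⟨(k, j), ?_, Or.inl rfl⟩⟩
    simp only [FF, mem_filter, mem_product, mem_range]
    refine ⟨⟨by omega, by omega⟩, by omega, ?_, ?_, ?_⟩
    · rcases hL with h | h
      · exact Or.inl h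
      · right; push_cast; omega
    · rcases hrt with h | h
      · exact Or.inl h
      · right; push_cast; omega
    · intro t ht
      simp only [mem_Ico] at ht
      have := hconst t ht.1 ht.2
      push_cast; omega
  · -- k is a right endpoint; find the left end of the interval
    push_neg at hL
    obtain ⟨hk0, hlt⟩ := hL
    have heq : y k = y (k-1) + 1 := by have := st1 hk0; omega
    have hR : k = m ∨ y k + 2 ≤ y (k+1) := by
      by_cases hkm2 : k = m
      · exact Or.inl hkm2
      · right
        have h1 := st2 hkm2
        by_contra hcon
        push_neg at hcon
        have hxA := hA.resolve_left hk0
        have hxB := hB.resolve_left hkm2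
        have hx'2 := hx'.2 (k-1) (by omega)
        have e : k - 1 + 2 = k + 1 := by omega
        rw [e] at hx'2
        have e2 : y (k-1) = x (k-1) + x' (k-1) := rfl
        have e3 : y k = x k + x' k := rfl
        have e4 : y (k+1) = x (k+1) + x' (k+1) := rfl
        omega
    have hP : ∃ d, (k - d = 0 ∨ y (k - d) ≠ y (k - d - 1) + 1) :=
      ⟨k, Or.inl (by omega)⟩
    set d0 := Nat.find hP with hd0
    have hspec := Nat.find_spec hP
    have hd0le : d0 ≤ k := Nat.find_min' hP (Or.inl (by omega))
    set i := k - d0 with hi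
    have hconst : ∀ t, i ≤ t → t < k → y (t+1) = y t + 1 := by
      intro t h1 h2
      have hlt2 : k - t - 1 < d0 := by omega
      have hmin := Nat.find_min hP hlt2
      push_neg at hmin
      have e1 : k - (k - t - 1) = t + 1 := by omega
      rw [e1, Nat.add_sub_cancel] at hmin
      exact hmin.2
    have hlf : i = 0 ∨ y (i-1) + 2 ≤ y i := by
      by_cases hi0 : i = 0
      · exact Or.inl hi0
      · right
        have hsp : y i ≠ y (i-1) + 1 := by
          rcases hspec with h | h
          · exact absurd h hi0
          · exact h
        have hm1 : y (i-1) ≤ y i := by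
          have := hmono (i-1) (by omega)
          have e : i - 1 + 1 = i := by omega
          rwa [e] at this
        by_contra hcon
        push_neg at hcon
        have hyi : y i = y (i-1) := by omega
        rcases Nat.lt_or_ge i k with hik | hik
        · have h1 := hconst i (le_refl i) hik
          have h2 := htwo (i-1) (by omega)
          have e : i - 1 + 2 = i + 1 := by omega
          rw [e] at h2
          omega
        · have hik2 : i = k := by omega
          rw [hik2] at hyi
          omega
    simp only [RR, mem_filter, mem_range]
    refine ⟨by omega, ⟨(i, k), ?_, Or.inr rfl⟩⟩
    simp only [FF, mem_filter, mem_product, mem_range]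
    refine ⟨⟨by omega, by omega⟩, by omega, ?_, ?_, ?_⟩
    · rcases hlf with h | h
      · exact Or.inl h
      · right; push_cast; omega
    · rcases hR with h | h
      · exact Or.inl h
      · right; push_cast; omega
    · intro t ht
      simp only [mem_Ico] at ht
      have := hconst t ht.1 ht.2
      push_cast; omega

theorem stmt6 (m : ℕ) (x x' : ℕ → ℕ) (hx : IsX m x) (hx' : IsX m x') :
    SS m x ∪ SS m x' ⊆ RR m (fun i => x i + x' i) := by
  intro k hk
  rcases mem_union.mp hk with h | h
  · exact key_stmt6 m x x' hx hx' h
  · have e : (fun i => x i + x' i) = fun i => x' i + x i := by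
      funext i; exact Nat.add_comm _ _
    rw [e]
    exact key_stmt6 m x' x hx' hx h
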